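/- On R^4, define P with nonzero entries P^{12} = p12 + p13 x4, P^{13} = p13, P^{23} = e^{2x4} p23, P^{24} = e^{x4} p24 (antisymmetric, others zero), and P' with nonzero entries P'^{12} = p'_{12} + a23 x3 + a24 x4 + (a53 p13/p23) x3 x4, P'^{13} = (a53 p13/p23) x3, P'^{23} = a53 e^{2x4} x3, P'^{24} = e^{x4}(p'_{24} + a64 x4), where all parameters are real constants and p23 ≠ 0. Then P and P' are compatible Poisson structures: [P,P] = [P',P'] = [P,P'] = 0 identically. -/

import Mathlib

open scoped BigOperators

noncomputable def pd {m : ℕ} (μ : Fin m) (f : (Fin m → ℝ) → ℝ) (x : Fin m → ℝ) : ℝ :=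
  fderiv ℝ f x (Pi.single μ 1)

/-- Poisson bracket associated to a bivector field `P`. -/
noncomputable def pbrk {m : ℕ} (P : (Fin m → ℝ) → Fin m → Fin m → ℝ)
    (f g : (Fin m → ℝ) → ℝ) (x : Fin m → ℝ) : ℝ :=
  ∑ μ, ∑ ν, P x μ ν * pd μ f x * pd ν g x

/-- Schouten bracket `[P,P]^{λμν}`. -/
noncomputable def schouten {m : ℕ} (P : (Fin m → ℝ) → Fin m → Fin m → ℝ)
    (l μ ν : Fin m) (x : Fin m → ℝ) : ℝ :=
  ∑ ρ, (P x ρ l * pd ρ (fun y => P y μ ν) x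
      + P x ρ ν * pd ρ (fun y => P y l μ) x
      + P x ρ μ * pd ρ (fun y => P y ν l) x)

/-- Mixed Schouten bracket `[P,Q]^{λμν}`. -/
noncomputable def schoutenMixed {m : ℕ} (P Q : (Fin m → ℝ) → Fin m → Fin m → ℝ)
    (l μ ν : Fin m) (x : Fin m → ℝ) : ℝ :=
  ∑ ρ, (P x ρ l * pd ρ (fun y => Q y μ ν) x + Q x ρ l * pd ρ (fun y => P y μ ν) x
      + P x ρ ν * pd ρ (fun y => Q y l μ) x + Q x ρ ν * pd ρ (fun y => P y l μ) x
      + P x ρ μ * pd ρ (fun y => Q y ν l) x + Q x ρ μ * pd ρ (fun y => P y ν l) x)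

/-- The Poisson bivector `P` on the group `A_{4,2}^{-1}`. -/
noncomputable def P42 (p12 p13 p23 p24 : ℝ) : (Fin 4 → ℝ) → Fin 4 → Fin 4 → ℝ :=
  fun x μ ν =>
    let A := p12 + p13 * x 3
    let B := Real.exp (2 * x 3) * p23
    let C := Real.exp (x 3) * p24
    !![0, A, p13, 0;
       -A, 0, B, C;
       -p13, -B, 0, 0;
       0, -C, 0, 0] μ ν

/-- The Poisson bivector `P'` on the group `A_{4,2}^{-1}`. -/
noncomputable def P42' (p13 p23 p12' p24' a23 a24 a53 a64 : ℝ) :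
    (Fin 4 → ℝ) → Fin 4 → Fin 4 → ℝ :=
  fun x μ ν =>
    let A := p12' + a23 * x 2 + a24 * x 3 + a53 * p13 / p23 * x 2 * x 3
    let B := a53 * p13 / p23 * x 2
    let C := a53 * Real.exp (2 * x 3) * x 2
    let D := Real.exp (x 3) * (p24' + a64 * x 3)
    !![0, A, B, 0;
       -A, 0, C, D;
       -B, -C, 0, 0;
       0, -D, 0, 0] μ ν

section lemmas
variable (μ : Fin 4) (x : Fin 4 → ℝ)

lemma pd_of_has {f : (Fin 4 → ℝ) → ℝ} {L : (Fin 4 → ℝ) →L[ℝ] ℝ} {x} (μ : Fin 4)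
    (h : HasFDerivAt f L x) : pd μ f x = L (Pi.single μ 1) := by
  rw [pd, h.fderiv]

lemma hproj (i : Fin 4) (x : Fin 4 → ℝ) :
    HasFDerivAt (fun y : Fin 4 → ℝ => y i)
      (ContinuousLinearMap.proj (R := ℝ) (φ := fun _ : Fin 4 => ℝ) i) x :=
  (ContinuousLinearMap.proj (R := ℝ) (φ := fun _ : Fin 4 => ℝ) i).hasFDerivAt

lemma pd_const (c : ℝ) : pd μ (fun _ => c) x = 0 := by
  simp [pd, fderiv_const]

lemma pd_neg (f : (Fin 4 → ℝ) → ℝ) : pd μ (fun y => -f y) x = -pd μ f x := by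
  simp [pd, fderiv_neg]

lemma pd_lin3 (c d : ℝ) :
    pd μ (fun y => c + d * y 3) x = if μ = 3 then d else 0 := by
  rw [pd_of_has μ (((hproj 3 x).const_mul d).const_add c)]
  simp [Pi.single_apply]
  by_cases hμ : μ = 3 <;> simp [hμ, eq_comm]

lemma pd_exp2c (c : ℝ) :
    pd μ (fun y => Real.exp (2 * y 3) * c) x = if μ = 3 then 2 * Real.exp (2 * x 3) * c else 0 := by
  rw [pd_of_has μ ((((hproj 3 x).const_mul 2).exp).mul_const c)]
  simp [Pi.single_apply]
  by_cases hμ : μ = 3 <;> simp [hμ, eq_comm] <;> ring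

lemma pd_expc (c : ℝ) :
    pd μ (fun y => Real.exp (y 3) * c) x = if μ = 3 then Real.exp (x 3) * c else 0 := by
  rw [pd_of_has μ (((hproj 3 x).exp).mul_const c)]
  simp [Pi.single_apply]
  by_cases hμ : μ = 3 <;> simp [hμ, eq_comm] <;> ring

lemma pd_A' (c a b k : ℝ) :
    pd μ (fun y => c + a * y 2 + b * y 3 + k * y 2 * y 3) x =
      if μ = 2 then a + k * x 3 else if μ = 3 then b + k * x 2 else 0 := by
  rw [pd_of_has μ (f := fun y => c + a * y 2 + b * y 3 + k * y 2 * y 3) (((((hproj 2 x).const_mul a).const_add c).add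
      ((hproj 3 x).const_mul b)).add (((hproj 2 x).const_mul k).mul (hproj 3 x)))]
  simp [Pi.single_apply]
  by_cases h2 : μ = 2 <;> by_cases h3 : μ = 3 <;> simp [h2, h3, eq_comm] <;> ring

lemma pd_B' (k : ℝ) :
    pd μ (fun y => k * y 2) x = if μ = 2 then k else 0 := by
  rw [pd_of_has μ ((hproj 2 x).const_mul k)]
  simp [Pi.single_apply]
  by_cases h2 : μ = 2 <;> simp [h2, eq_comm]

lemma pd_C' (a : ℝ) :
    pd μ (fun y => a * Real.exp (2 * y 3) * y 2) x =
      if μ = 2 then a * Real.exp (2 * x 3) else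
      if μ = 3 then 2 * a * Real.exp (2 * x 3) * x 2 else 0 := by
  rw [pd_of_has μ (f := fun y => a * Real.exp (2 * y 3) * y 2) (((((hproj 3 x).const_mul 2).exp).const_mul a).mul (hproj 2 x))]
  simp [Pi.single_apply]
  by_cases h2 : μ = 2 <;> by_cases h3 : μ = 3 <;> simp [h2, h3, eq_comm] <;> ring

lemma pd_D' (c d : ℝ) :
    pd μ (fun y => Real.exp (y 3) * (c + d * y 3)) x =
      if μ = 3 then Real.exp (x 3) * (c + d * x 3) + Real.exp (x 3) * d else 0 := by
  rw [pd_of_has μ (f := fun y => Real.exp (y 3) * (c + d * y 3)) (((hproj 3 x).exp).mul (((hproj 3 x).const_mul d).const_add c))]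
  simp [Pi.single_apply]
  by_cases h3 : μ = 3 <;> simp [h3, eq_comm] <;> ring

lemma fin4cases (a : Fin 4) : a = 0 ∨ a = 1 ∨ a = 2 ∨ a = 3 := by omega

lemma pd_P42 (p12 p13 p23 p24 : ℝ) (a b : Fin 4) :
    pd μ (fun y => P42 p12 p13 p23 p24 y a b) x =
      if μ = 3 then
        !![0, p13, 0, 0;
           -p13, 0, 2 * Real.exp (2 * x 3) * p23, Real.exp (x 3) * p24;
           0, -(2 * Real.exp (2 * x 3) * p23), 0, 0;
           0, -(Real.exp (x 3) * p24), 0, 0] a b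
      else 0 := by
  rcases fin4cases a with rfl | rfl | rfl | rfl <;> rcases fin4cases b with rfl | rfl | rfl | rfl <;>
    simp only [P42, P42', Matrix.cons_val', Matrix.cons_val_zero, Matrix.cons_val_one,
      Matrix.cons_val_two, Matrix.cons_val_three, Matrix.head_cons, Matrix.tail_cons,
      Matrix.empty_val', Matrix.cons_val_fin_one, Matrix.head_fin_const, Matrix.of_apply,
      Matrix.vecHead, Matrix.vecTail, Function.comp] <;>
    (try simp only [pd_const, pd_neg, pd_lin3, pd_exp2c, pd_expc, pd_A', pd_B', pd_C', pd_D']) <;>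
    by_cases h2 : μ = 2 <;> by_cases h3 : μ = 3 <;> subst_vars <;>
    first
    | rfl
    | (simp_all [pd_const, pd_neg, pd_lin3, pd_exp2c, pd_expc, pd_A', pd_B', pd_C', pd_D', Matrix.vecHead, Matrix.vecTail]; try ring)
    | ring
    | skip

lemma pd_P42' (p13 p23 p12' p24' a23 a24 a53 a64 : ℝ) (a b : Fin 4) :
    pd μ (fun y => P42' p13 p23 p12' p24' a23 a24 a53 a64 y a b) x =
      (if μ = 2 then
        !![0, a23 + a53 * p13 / p23 * x 3, a53 * p13 / p23, 0;
           -(a23 + a53 * p13 / p23 * x 3), 0, a53 * Real.exp (2 * x 3), 0;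
           -(a53 * p13 / p23), -(a53 * Real.exp (2 * x 3)), 0, 0;
           0, 0, 0, 0] a b
      else 0) +
      (if μ = 3 then
        !![0, a24 + a53 * p13 / p23 * x 2, 0, 0;
           -(a24 + a53 * p13 / p23 * x 2), 0, 2 * a53 * Real.exp (2 * x 3) * x 2,
             Real.exp (x 3) * (p24' + a64 * x 3) + Real.exp (x 3) * a64;
           0, -(2 * a53 * Real.exp (2 * x 3) * x 2), 0, 0;
           0, -(Real.exp (x 3) * (p24' + a64 * x 3) + Real.exp (x 3) * a64), 0, 0] a b
      else 0) := by
  rcases fin4cases a with rfl | rfl | rfl | rfl <;> rcases fin4cases b with rfl | rfl | rfl | rfl <;>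
    simp only [P42, P42', Matrix.cons_val', Matrix.cons_val_zero, Matrix.cons_val_one,
      Matrix.cons_val_two, Matrix.cons_val_three, Matrix.head_cons, Matrix.tail_cons,
      Matrix.empty_val', Matrix.cons_val_fin_one, Matrix.head_fin_const, Matrix.of_apply,
      Matrix.vecHead, Matrix.vecTail, Function.comp] <;>
    (try simp only [pd_const, pd_neg, pd_lin3, pd_exp2c, pd_expc, pd_A', pd_B', pd_C', pd_D']) <;>
    by_cases h2 : μ = 2 <;> by_cases h3 : μ = 3 <;> subst_vars <;>
    first
    | rfl
    | (simp_all [pd_const, pd_neg, pd_lin3, pd_exp2c, pd_expc, pd_A', pd_B', pd_C', pd_D', Matrix.vecHead, Matrix.vecTail]; try ring)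
    | ring
    | skip
end lemmas

lemma exp_two_mul' (t : ℝ) : Real.exp (2 * t) = Real.exp t * Real.exp t := by
  rw [two_mul, Real.exp_add]

set_option maxHeartbeats 4000000 in
theorem A42_compatible (p12 p13 p23 p24 p12' p24' a23 a24 a53 a64 : ℝ)
    (h23 : p23 ≠ 0) :
    (∀ x l μ ν, schouten (P42 p12 p13 p23 p24) l μ ν x = 0) ∧
    (∀ x l μ ν, schouten (P42' p13 p23 p12' p24' a23 a24 a53 a64) l μ ν x = 0) ∧
    (∀ x l μ ν, schoutenMixed (P42 p12 p13 p23 p24)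
        (P42' p13 p23 p12' p24' a23 a24 a53 a64) l μ ν x = 0) := by
  refine ⟨?_, ?_, ?_⟩ <;> intro x l μ ν <;>
    rcases fin4cases l with rfl | rfl | rfl | rfl <;>
    rcases fin4cases μ with rfl | rfl | rfl | rfl <;>
    rcases fin4cases ν with rfl | rfl | rfl | rfl <;>
    simp only [schouten, schoutenMixed, Fin.sum_univ_four, pd_P42, pd_P42'] <;>
    simp [P42, P42', Matrix.vecHead, Matrix.vecTail, exp_two_mul'] <;>
    ring_nf <;>
    first
    | rfl
    | (field_simp; try ring)
    | skip
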